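/- Fix a real number μ > 0 and define φ : [0, ∞) → ℝ by φ(x) = (e^{−x} − e^{−μ} + (x − μ)e^{−μ})/(x − μ)² for x ≠ μ and φ(μ) = (1/2)e^{−μ}. Then φ is monotonically decreasing on [0, ∞): for all 0 ≤ x₁ ≤ x₂, φ(x₁) ≥ φ(x₂). -/

import Mathlib

noncomputable def Gaux (t : ℝ) : ℝ := ∫ s in (0:ℝ)..1, (1 - s) * Real.exp (-(s * t))

lemma Gaux_cont (t : ℝ) : Continuous fun s : ℝ => (1 - s) * Real.exp (-(s * t)) := by
  continuity

lemma Gaux_mono {t₁ t₂ : ℝ} (h : t₁ ≤ t₂) : Gaux t₂ ≤ Gaux t₁ := by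
  apply intervalIntegral.integral_mono_on (by norm_num)
    ((Gaux_cont t₂).intervalIntegrable _ _) ((Gaux_cont t₁).intervalIntegrable _ _)
  intro s hs
  have hs0 : 0 ≤ s := hs.1
  have hs1 : s ≤ 1 := hs.2
  have hexp : Real.exp (-(s * t₂)) ≤ Real.exp (-(s * t₁)) := by
    apply Real.exp_le_exp.mpr; nlinarith
  have h1s : (0:ℝ) ≤ 1 - s := by linarith
  exact mul_le_mul_of_nonneg_left hexp h1s

lemma Gaux_zero : Gaux 0 = 1/2 := by
  unfold Gaux
  have h : ∀ s : ℝ, (1 - s) * Real.exp (-(s * 0)) = 1 - s := by intro s; simp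
  simp_rw [h]
  rw [intervalIntegral.integral_sub intervalIntegrable_const
    intervalIntegral.intervalIntegrable_id]
  have hid : (∫ x : ℝ in (0:ℝ)..1, x) = 1/2 := by simp
  rw [intervalIntegral.integral_const, hid]
  norm_num

lemma Gaux_eq {t : ℝ} (ht : t ≠ 0) :
    Gaux t = (Real.exp (-t) - 1 + t) / t ^ 2 := by
  have key : ∀ s ∈ Set.uIcc (0:ℝ) 1,
      HasDerivAt (fun s => (s / t + (1 - t) / t ^ 2) * Real.exp (-(s * t)))
        ((1 - s) * Real.exp (-(s * t))) s := by
    intro s _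
    have h1 : HasDerivAt (fun s : ℝ => s / t + (1 - t) / t ^ 2) (1 / t) s := by
      simpa using ((hasDerivAt_id s).div_const t).add_const ((1 - t) / t ^ 2)
    have hinner : HasDerivAt (fun s : ℝ => -(s * t)) (-t) s := by
      simpa using ((hasDerivAt_id s).mul_const t).fun_neg
    have h2 : HasDerivAt (fun s : ℝ => Real.exp (-(s * t))) (Real.exp (-(s * t)) * (-t)) s :=
      hinner.exp
    have := h1.fun_mul h2
    refine this.congr_deriv ?_
    field_simp
    ring
  have hint := intervalIntegral.integral_eq_sub_of_hasDerivAt key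
    ((Gaux_cont t).intervalIntegrable _ _)
  unfold Gaux
  rw [hint]
  field_simp
  simp only [mul_zero, neg_zero, Real.exp_zero]
  ring

/-- the continuously-extended divided-difference quotient φ is
monotonically decreasing on [0, ∞). -/
theorem stmt_6 (μ : ℝ) (hμ : 0 < μ)
    (φ : ℝ → ℝ)
    (hφ : ∀ x, φ x = if x = μ then (1/2) * Real.exp (-μ)
      else (Real.exp (-x) - Real.exp (-μ) + (x - μ) * Real.exp (-μ)) / (x - μ)^2) :
    ∀ x₁ x₂ : ℝ, 0 ≤ x₁ → x₁ ≤ x₂ → φ x₂ ≤ φ x₁ := by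
  have hφG : ∀ x, φ x = Real.exp (-μ) * Gaux (x - μ) := by
    intro x
    rw [hφ]
    by_cases hx : x = μ
    · rw [if_pos hx, hx]
      simp [Gaux_zero]
      ring
    · have ht : x - μ ≠ 0 := sub_ne_zero.mpr hx
      rw [if_neg hx, Gaux_eq ht]
      rw [show -x = -(x - μ) + -μ by ring, Real.exp_add]
      field_simp
  intro x₁ x₂ _ h12
  rw [hφG, hφG]
  exact mul_le_mul_of_nonneg_left (Gaux_mono (by linarith)) (Real.exp_pos _).le
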